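/- Let Γ be the ladder diagram associated with integers 0 = n₀ < n₁ < ⋯ < n_r < n_{r+1} = n and let γ be a face of Γ. If L_i(a,b) and L_j(c,d) are two distinct L-shaped blocks (i.e., (i, a, b) ≠ (j, c, d)) that are both rigid in γ, then their interiors are disjoint; equivalently, there is no unit box □^{(x,y)} contained in both L_i(a,b) and L_j(c,d). -/
import Mathlib


/-- A grid edge, encoded by its lower-left endpoint together with its direction:
`(v, false)` is the horizontal edge from `v` to `v + (1, 0)`, and `(v, true)` is the
vertical edge from `v` to `v + (0, 1)`. -/
abbrev GridEdge := (ℤ × ℤ) × Bool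

/-- The unit step of an edge direction. -/
def edir : Bool → ℤ × ℤ
  | false => (1, 0)
  | true => (0, 1)

/-- The vertex set of the ladder diagram `Γ(n₁, …, n_r; n)`:
`V = ⋃_{j=0}^{r} (([n_j, n_{j+1}] × [0, n − n_{j+1}]) ∩ ℤ²)`. -/
def ladderV (r n : ℕ) (nseq : ℕ → ℕ) : Set (ℤ × ℤ) :=
  {v | ∃ j ≤ r, (nseq j : ℤ) ≤ v.1 ∧ v.1 ≤ (nseq (j + 1) : ℤ) ∧
        0 ≤ v.2 ∧ v.2 ≤ (n : ℤ) - (nseq (j + 1) : ℤ)}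

/-- A positive path on the ladder diagram: a lattice path `p 0, p 1, …, p n` starting at the
origin, each step increasing one coordinate by `1`, all of whose vertices lie in the ladder
diagram.  (Such a path is exactly a shortest path in the ladder diagram from the origin to a
top vertex, since `p n` automatically has coordinate sum `n`.) -/
def IsPositivePath (r n : ℕ) (nseq : ℕ → ℕ) (p : ℕ → ℤ × ℤ) : Prop :=
  p 0 = (0, 0) ∧
    (∀ i < n, p (i + 1) = p i + edir false ∨ p (i + 1) = p i + edir true) ∧
    (∀ i ≤ n, p i ∈ ladderV r n nseq)

/-- The set of grid edges traversed by a path of length `n`. -/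
def pathEdges (n : ℕ) (p : ℕ → ℤ × ℤ) : Set GridEdge :=
  {e | ∃ i < n, p i = e.1 ∧ p (i + 1) = e.1 + edir e.2}

/-- A face `γ` of the ladder diagram, encoded by its edge set `E`: a union of positive paths
which contains all top vertices (every edge of `E` lies on a positive path whose edges all
belong to `E`, and every top vertex is the endpoint of such a path). -/
def IsFaceOf (r n : ℕ) (nseq : ℕ → ℕ) (E : Set GridEdge) : Prop :=
  (∀ e ∈ E, ∃ p, IsPositivePath r n nseq p ∧ e ∈ pathEdges n p ∧ pathEdges n p ⊆ E) ∧
    (∀ v ∈ ladderV r n nseq, v.1 + v.2 = (n : ℤ) →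
      ∃ p, IsPositivePath r n nseq p ∧ pathEdges n p ⊆ E ∧ p n = v)

/-- The first of the two unit boxes adjacent to a grid edge, encoded by its top-right
lattice point. -/
def adjBox1 (e : GridEdge) : ℤ × ℤ :=
  match e.2 with
  | false => (e.1.1 + 1, e.1.2)
  | true => (e.1.1, e.1.2 + 1)

/-- The second of the two unit boxes adjacent to a grid edge, encoded by its top-right
lattice point. -/
def adjBox2 (e : GridEdge) : ℤ × ℤ := (e.1.1 + 1, e.1.2 + 1)

/-- A grid edge lies in the interior of a region (a union of closed unit boxes, encoded by
the set `R` of top-right lattice points of its boxes) iff both adjacent unit boxes belong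
to the region. -/
def EdgeInInterior (R : ℤ × ℤ → Prop) (e : GridEdge) : Prop :=
  R (adjBox1 e) ∧ R (adjBox2 e)

/-- Membership of the unit box with top-right vertex `c` in the `L`-shaped block `L_k(p,q)`:
`L_k(p,q) = ⋃_{i=0}^{k−1} (□^{(p, q+i)} ∪ □^{(p+i, q)})`. -/
def InLBlock (k : ℕ) (p q : ℤ) (c : ℤ × ℤ) : Prop :=
  (c.1 = p ∧ q ≤ c.2 ∧ c.2 ≤ q + (k : ℤ) - 1) ∨
    (c.2 = q ∧ p ≤ c.1 ∧ c.1 ≤ p + (k : ℤ) - 1)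

/-- `L_k(p,q)` is rigid in the face with edge set `E`: no edge of `E` lies in the interior of
`L_k(p,q)`, and both the rightmost edge (from `(p+k−1, q−1)` to `(p+k−1, q)`) and the top edge
(from `(p−1, q+k−1)` to `(p, q+k−1)`) of `L_k(p,q)` belong to `E`. -/
def IsRigid (k : ℕ) (p q : ℤ) (E : Set GridEdge) : Prop :=
  (∀ e ∈ E, ¬ EdgeInInterior (InLBlock k p q) e) ∧
    ((p + (k : ℤ) - 1, q - 1), true) ∈ E ∧
    ((p - 1, q + (k : ℤ) - 1), false) ∈ E

/-! ### Auxiliary lemmas -/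


lemma ppath_mono {r n : ℕ} {nseq : ℕ → ℕ} {p : ℕ → ℤ × ℤ}
    (hp : IsPositivePath r n nseq p) :
    ∀ s t : ℕ, s ≤ t → t ≤ n → (p s).1 ≤ (p t).1 ∧ (p s).2 ≤ (p t).2 := by
  intro s t hst htn
  induction t with
  | zero =>
    have : s = 0 := Nat.le_zero.mp hst
    simp [this]
  | succ t ih =>
    rcases Nat.lt_or_ge s (t + 1) with h | h
    · have h1 : s ≤ t := Nat.lt_succ_iff.mp h
      have h2 := ih h1 (le_trans (Nat.le_succ t) htn)
      have hstep := hp.2.1 t (by omega)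
      rcases hstep with h3 | h3 <;> rw [h3] <;> simp [edir, Prod.fst_add, Prod.snd_add] <;>
        constructor <;> omega
    · have : s = t + 1 := le_antisymm hst h
      simp [this]

lemma ladder_nonneg {r n : ℕ} {nseq : ℕ → ℕ} {v : ℤ × ℤ}
    (h : v ∈ ladderV r n nseq) : 0 ≤ v.1 ∧ 0 ≤ v.2 := by
  obtain ⟨j, _, h1, _, h3, _⟩ := h
  exact ⟨le_trans (Int.natCast_nonneg _) h1, h3⟩

/-- An edge of a face has its lower-left vertex in the ladder diagram (in particular
with nonnegative coordinates). -/
lemma edge_vertex_nonneg {r n : ℕ} {nseq : ℕ → ℕ} {E : Set GridEdge}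
    (hE : IsFaceOf r n nseq E) {e : GridEdge} (he : e ∈ E) :
    0 ≤ e.1.1 ∧ 0 ≤ e.1.2 := by
  obtain ⟨p, hp, hpe, _⟩ := hE.1 e he
  obtain ⟨t, htn, h1, _⟩ := hpe
  have := hp.2.2 t (le_of_lt htn)
  rw [h1] at this
  exact ladder_nonneg this

/-- **Key lemma.** If `L_i(a,b)` is rigid in the face `E`, then no vertex of any edge of `E`
lies in the rectangle `[a, a+i-2] × [b, b+i-2]` (the inner corner region of the block).
Indeed, a positive path reaching such a vertex must enter the quadrant
`{x ≥ a, y ≥ b}` at some step, and that entering edge is interior to the block. -/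
lemma key_lemma {r n : ℕ} {nseq : ℕ → ℕ} {E : Set GridEdge}
    (hE : IsFaceOf r n nseq E) {i : ℕ} {a b : ℤ}
    (hr : IsRigid i a b E) (v : ℤ × ℤ)
    (hv : ∃ e ∈ E, v = e.1 ∨ v = e.1 + edir e.2)
    (h1 : a ≤ v.1) (h2 : v.1 ≤ a + (i : ℤ) - 2)
    (h3 : b ≤ v.2) (h4 : v.2 ≤ b + (i : ℤ) - 2) : False := by
  classical
  -- positivity of a and b
  have ha : 1 ≤ a := by
    have := edge_vertex_nonneg hE hr.2.2
    simp at this; omega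
  have hb : 1 ≤ b := by
    have := edge_vertex_nonneg hE hr.2.1
    simp at this; omega
  obtain ⟨e, heE, hv⟩ := hv
  obtain ⟨p, hp, hpe, hsub⟩ := hE.1 e heE
  obtain ⟨t, htn, ht1, ht2⟩ := hpe
  -- a time t0 ≤ n with p t0 = v
  obtain ⟨t0, ht0n, hpt0⟩ : ∃ t0, t0 ≤ n ∧ p t0 = v := by
    rcases hv with h | h
    · exact ⟨t, le_of_lt htn, by rw [ht1, h]⟩
    · exact ⟨t + 1, by omega, by rw [ht2, h]⟩
  have hex : ∃ m, m ≤ t0 ∧ a ≤ (p m).1 ∧ b ≤ (p m).2 :=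
    ⟨t0, le_refl _, by rw [hpt0]; exact h1, by rw [hpt0]; exact h3⟩
  obtain ⟨m, hmspec, hmin⟩ :
      ∃ m, (m ≤ t0 ∧ a ≤ (p m).1 ∧ b ≤ (p m).2) ∧
        ∀ k < m, ¬ (k ≤ t0 ∧ a ≤ (p k).1 ∧ b ≤ (p k).2) :=
    ⟨Nat.find hex, Nat.find_spec hex, fun k hk => Nat.find_min hex hk⟩
  obtain ⟨hmt0, hma, hmb⟩ := hmspec
  have hm0 : m ≠ 0 := by
    intro h
    rw [h, hp.1] at hma
    simp at hma; omega
  have hm1 : m - 1 + 1 = m := by omega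
  have hstep := hp.2.1 (m - 1) (by omega)
  rw [hm1] at hstep
  have hmono1 := ppath_mono hp (m - 1) t0 (by omega) ht0n
  rw [hpt0] at hmono1
  rcases hstep with h | h
  · -- horizontal step entering the quadrant: its edge is interior to the block
    have hx1 : (p m).1 = (p (m - 1)).1 + 1 := by rw [h]; simp [edir]
    have hx2 : (p m).2 = (p (m - 1)).2 := by rw [h]; simp [edir]
    have hy : b ≤ (p (m - 1)).2 := by omega
    have hxa : (p (m - 1)).1 = a - 1 := by
      have : ¬ a ≤ (p (m - 1)).1 := by
        intro hc
        exact hmin (m - 1) (by omega) ⟨by omega, hc, hy⟩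
      omega
    have heE' : ((p (m - 1)), false) ∈ E := by
      apply hsub
      exact ⟨m - 1, by omega, rfl, by rw [hm1]; exact h⟩
    apply hr.1 _ heE'
    constructor <;> simp [adjBox1, adjBox2, InLBlock] <;> omega
  · -- vertical step entering the quadrant
    have hx1 : (p m).1 = (p (m - 1)).1 := by rw [h]; simp [edir]
    have hx2 : (p m).2 = (p (m - 1)).2 + 1 := by rw [h]; simp [edir]
    have hy : a ≤ (p (m - 1)).1 := by omega
    have hxb : (p (m - 1)).2 = b - 1 := by
      have : ¬ b ≤ (p (m - 1)).2 := by
        intro hc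
        exact hmin (m - 1) (by omega) ⟨by omega, hy, hc⟩
      omega
    have heE' : ((p (m - 1)), true) ∈ E := by
      apply hsub
      exact ⟨m - 1, by omega, rfl, by rw [hm1]; exact h⟩
    apply hr.1 _ heE'
    constructor <;> simp [adjBox1, adjBox2, InLBlock] <;> omega

/-- Two rigid blocks with vertical arms in the same column and overlapping ranges. -/
lemma caseCC {r n : ℕ} {nseq : ℕ → ℕ} {E : Set GridEdge}
    (hE : IsFaceOf r n nseq E) {i j : ℕ} {a b d : ℤ}
    (hi : 1 ≤ i) (hj : 1 ≤ j)
    (hr1 : IsRigid i a b E) (hr2 : IsRigid j a d E)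
    (hbd : b ≤ d) (hne : ¬ (i = j ∧ b = d))
    (y : ℤ) (hy1 : b ≤ y) (hy2 : y ≤ b + (i : ℤ) - 1)
    (hy3 : d ≤ y) (hy4 : y ≤ d + (j : ℤ) - 1) : False := by
  have hd : d ≤ b + (i : ℤ) - 1 := le_trans hy3 hy2
  -- top edge of L' is not interior to L, so d + j ≥ b + i
  have h1 : b + (i : ℤ) ≤ d + (j : ℤ) := by
    by_contra hcon
    push_neg at hcon
    apply hr1.1 _ hr2.2.2
    constructor <;> simp [adjBox1, adjBox2, InLBlock] <;> omega
  -- top edge of L is not interior to L', so b + i ≥ d + j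
  have h2 : d + (j : ℤ) ≤ b + (i : ℤ) := by
    by_contra hcon
    push_neg at hcon
    apply hr2.1 _ hr1.2.2
    constructor <;> simp [adjBox1, adjBox2, InLBlock] <;> omega
  have heq : b + (i : ℤ) = d + (j : ℤ) := le_antisymm h1 h2
  have hbd' : b < d := by
    rcases lt_or_eq_of_le hbd with h | h
    · exact h
    · exfalso; apply hne; constructor
      · have : (i : ℤ) = (j : ℤ) := by omega
        exact_mod_cast this
      · exact h
  have hji : (j : ℤ) < (i : ℤ) := by omega
  exact key_lemma hE hr1 (a + (j : ℤ) - 1, d - 1)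
    ⟨_, hr2.2.1, Or.inl rfl⟩ (by simp; omega) (by simp; omega) (by simp; omega) (by simp; omega)

/-- Two rigid blocks with horizontal arms in the same row and overlapping ranges. -/
lemma caseRR {r n : ℕ} {nseq : ℕ → ℕ} {E : Set GridEdge}
    (hE : IsFaceOf r n nseq E) {i j : ℕ} {a b c : ℤ}
    (hi : 1 ≤ i) (hj : 1 ≤ j)
    (hr1 : IsRigid i a b E) (hr2 : IsRigid j c b E)
    (hac : a ≤ c) (hne : ¬ (i = j ∧ a = c))
    (x : ℤ) (hx1 : a ≤ x) (hx2 : x ≤ a + (i : ℤ) - 1)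
    (hx3 : c ≤ x) (hx4 : x ≤ c + (j : ℤ) - 1) : False := by
  have hc : c ≤ a + (i : ℤ) - 1 := le_trans hx3 hx2
  have h1 : a + (i : ℤ) ≤ c + (j : ℤ) := by
    by_contra hcon
    push_neg at hcon
    apply hr1.1 _ hr2.2.1
    constructor <;> simp [adjBox1, adjBox2, InLBlock] <;> omega
  have h2 : c + (j : ℤ) ≤ a + (i : ℤ) := by
    by_contra hcon
    push_neg at hcon
    apply hr2.1 _ hr1.2.1
    constructor <;> simp [adjBox1, adjBox2, InLBlock] <;> omega
  have heq : a + (i : ℤ) = c + (j : ℤ) := le_antisymm h1 h2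
  have hac' : a < c := by
    rcases lt_or_eq_of_le hac with h | h
    · exact h
    · exfalso; apply hne; constructor
      · have : (i : ℤ) = (j : ℤ) := by omega
        exact_mod_cast this
      · exact h
  have hji : (j : ℤ) < (i : ℤ) := by omega
  exact key_lemma hE hr1 (c - 1, b + (j : ℤ) - 1)
    ⟨_, hr2.2.2, Or.inl rfl⟩ (by simp; omega) (by simp; omega) (by simp; omega) (by simp; omega)

/-- Vertical arm of `L_i(a,b)` crosses horizontal arm of `L_j(c,d)`. -/
lemma caseCR {r n : ℕ} {nseq : ℕ → ℕ} {E : Set GridEdge}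
    (hE : IsFaceOf r n nseq E) {i j : ℕ} {a b c d : ℤ}
    (hi : 1 ≤ i) (hj : 1 ≤ j)
    (hr1 : IsRigid i a b E) (hr2 : IsRigid j c d E)
    (hne : ¬ (i = j ∧ a = c ∧ b = d))
    (h1 : b ≤ d) (h2 : d ≤ b + (i : ℤ) - 1)
    (h3 : c ≤ a) (h4 : a ≤ c + (j : ℤ) - 1) : False := by
  by_cases hd : d = b
  · -- both horizontal arms lie in row b; overlap at column a
    subst hd
    exact caseRR hE hj hi hr2 hr1 h3 (by tauto) a h3 h4 le_rfl (by omega)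
  by_cases hc : c = a
  · subst hc
    exact caseCC hE hi hj hr1 hr2 h1 (by tauto) d h1 h2 le_rfl (by omega)
  have hca : c < a := lt_of_le_of_ne h3 hc
  have hbd : b < d := lt_of_le_of_ne h1 (fun h => hd h.symm)
  have hi2 : 2 ≤ (i : ℤ) := by omega
  by_cases h5 : c + (j : ℤ) - 1 ≤ a + (i : ℤ) - 2
  · -- right edge of L' has its lower vertex in the notch of L
    exact key_lemma hE hr1 (c + (j : ℤ) - 1, d - 1)
      ⟨_, hr2.2.1, Or.inl rfl⟩ (by simp; omega) (by simp; omega) (by simp; omega) (by simp; omega)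
  · push_neg at h5
    -- upper vertex of the top edge of L lies in the notch of L'
    exact key_lemma hE hr2 (((a - 1, b + (i : ℤ) - 1) : ℤ × ℤ) + edir false)
      ⟨_, hr1.2.2, Or.inr rfl⟩ (by simp [edir]; omega) (by simp [edir]; omega)
      (by simp [edir]; omega) (by simp [edir]; omega)

/-- Let `Γ` be the ladder diagram associated with
`0 = n₀ < n₁ < ⋯ < n_r < n_{r+1} = n` and let `γ` (with edge set `E`) be a face of `Γ`.
If `L_i(a,b)` and `L_j(c,d)` are two distinct `L`-shaped blocks that are both rigid in `γ`,
then their interiors are disjoint: no unit box is contained in both. -/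
theorem statement16 (r n : ℕ) (nseq : ℕ → ℕ)
    (h0 : nseq 0 = 0) (hlast : nseq (r + 1) = n)
    (hmono : ∀ j ≤ r, nseq j < nseq (j + 1))
    (E : Set GridEdge) (hE : IsFaceOf r n nseq E)
    (i : ℕ) (hi : 1 ≤ i) (a b : ℤ) (j : ℕ) (hj : 1 ≤ j) (c d : ℤ)
    (hne : (i, a, b) ≠ (j, c, d))
    (hr1 : IsRigid i a b E) (hr2 : IsRigid j c d E) :
    ∀ x : ℤ × ℤ, ¬ (InLBlock i a b x ∧ InLBlock j c d x) := by
  have hne' : ¬ (i = j ∧ a = c ∧ b = d) := by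
    rintro ⟨e1, e2, e3⟩
    exact hne (by simp [e1, e2, e3])
  rintro x ⟨hx1, hx2⟩
  rcases hx1 with ⟨hxa, hb1, hb2⟩ | ⟨hxb, ha1, ha2⟩ <;>
    rcases hx2 with ⟨hxc, hd1, hd2⟩ | ⟨hxd, hc1, hc2⟩
  · -- column-column
    have hac : c = a := by rw [← hxa, ← hxc]
    subst hac
    rcases le_total b d with h | h
    · exact caseCC hE hi hj hr1 hr2 h (by tauto) x.2 hb1 hb2 hd1 hd2
    · exact caseCC hE hj hi hr2 hr1 h (by tauto) x.2 hd1 hd2 hb1 hb2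
  · -- column of L, row of L'
    rw [hxa] at hc1 hc2
    rw [hxd] at hb1 hb2
    exact caseCR hE hi hj hr1 hr2 hne' hb1 hb2 hc1 hc2
  · -- row of L, column of L'
    rw [hxc] at ha1 ha2
    rw [hxb] at hd1 hd2
    exact caseCR hE hj hi hr2 hr1 (by tauto) hd1 hd2 ha1 ha2
  · -- row-row
    have hbd : d = b := by rw [← hxb, ← hxd]
    subst hbd
    rcases le_total a c with h | h
    · exact caseRR hE hi hj hr1 hr2 h (by tauto) x.1 ha1 ha2 hc1 hc2
    · exact caseRR hE hj hi hr2 hr1 h (by tauto) x.1 hc1 hc2 ha1 ha2
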